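/- Let 𝒟 be the subgroup of the direct product ∏_{n∈ℕ} D_{2n+3} of dihedral groups consisting of all sequences whose coordinates are rotations for all but finitely many n. Then the center of 𝒟 is trivial. -/

import Mathlib

/-- The subgroup `𝒟` of `∏ n, D_{2n+3}` of sequences whose coordinates are rotations
for all but finitely many `n`. -/
def scriptD : Subgroup (∀ n : ℕ, DihedralGroup (2 * n + 3)) where
  carrier := {f | {n : ℕ | ¬ ∃ i, f n = DihedralGroup.r i}.Finite}
  one_mem' := by
    apply Set.finite_empty.subset
    intro n hn
    exact hn ⟨0, DihedralGroup.one_def⟩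
  mul_mem' := by
    intro f g hf hg
    apply (Set.Finite.union hf hg).subset
    intro n hn
    simp only [Set.mem_union, Set.mem_setOf_eq] at *
    by_contra hc
    rw [not_or, not_not, not_not] at hc
    obtain ⟨⟨i, hi⟩, ⟨j, hj⟩⟩ := hc
    exact hn ⟨i + j, by rw [Pi.mul_apply, hi, hj, DihedralGroup.r_mul_r]⟩
  inv_mem' := by
    intro f hf
    apply hf.subset
    intro n hn
    simp only [Set.mem_setOf_eq] at *
    by_contra hc
    obtain ⟨i, hi⟩ := hc
    refine hn ⟨-i, ?_⟩
    rw [Pi.inv_apply, hi]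
    rw [inv_eq_iff_mul_eq_one, DihedralGroup.r_mul_r, add_neg_cancel, DihedralGroup.one_def]

open DihedralGroup in
lemma aux_dihedral {n : ℕ} (x : DihedralGroup (2 * n + 3))
    (h1 : x * sr 0 = sr 0 * x) (h2 : x * r 1 = r 1 * x) : x = 1 := by
  cases x with
  | r i =>
    rw [r_mul_sr, sr_mul_r, zero_add, zero_sub] at h1
    have hi : -i = i := by injection h1
    have h2i : (2 : ZMod (2*n+3)) * i = 0 := by linear_combination -hi
    have : i = 0 := by
      have h1' : ((n + 2 : ℕ) : ZMod (2*n+3)) * 2 = 1 := by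
        have h4 : ((2*n+4 : ℕ) : ZMod (2*n+3)) = 1 := by
          rw [show (2*n+4:ℕ) = (2*n+3) + 1 by ring, Nat.cast_add, ZMod.natCast_self,
            Nat.cast_one, zero_add]
        calc ((n + 2 : ℕ) : ZMod (2*n+3)) * 2 = ((2*n+4 : ℕ) : ZMod (2*n+3)) := by push_cast; ring
        _ = 1 := h4
      calc i = (((n + 2 : ℕ) : ZMod (2*n+3)) * 2) * i := by rw [h1', one_mul]
      _ = ((n + 2 : ℕ) : ZMod (2*n+3)) * (2 * i) := by ring
      _ = 0 := by rw [h2i, mul_zero]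
    rw [this, one_def]
  | sr i =>
    rw [sr_mul_r, r_mul_sr] at h2
    have hi : i + 1 = i - 1 := by injection h2
    have h2' : (2 : ZMod (2*n+3)) = 0 := by
      have := sub_eq_zero.mpr hi
      rw [show i + 1 - (i - 1) = 2 by ring] at this
      exact this
    have : ((2 : ℕ) : ZMod (2*n+3)) = 0 := by exact_mod_cast h2'
    rw [ZMod.natCast_eq_zero_iff] at this
    exact absurd (Nat.le_of_dvd two_pos this) (by omega)

theorem center_scriptD_trivial : Subgroup.center scriptD = ⊥ := by
  rw [eq_bot_iff]
  rintro ⟨z, hz⟩ hmem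
  rw [Subgroup.mem_center_iff] at hmem
  have key : ∀ (n : ℕ) (a : DihedralGroup (2 * n + 3)),
      Pi.mulSingle (M := fun k => DihedralGroup (2*k+3)) n a * z = z * Pi.mulSingle (M := fun k => DihedralGroup (2*k+3)) n a := by
    intro n a
    have hmemD : Pi.mulSingle (M := fun k => DihedralGroup (2*k+3)) n a ∈ scriptD := by
      apply (Set.finite_singleton n).subset
      intro k hk
      simp only [Set.mem_setOf_eq, Set.mem_singleton_iff] at *
      by_contra hkn
      exact hk ⟨0, by rw [Pi.mulSingle_eq_of_ne hkn, DihedralGroup.one_def]⟩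
    have := hmem ⟨Pi.mulSingle (M := fun k => DihedralGroup (2*k+3)) n a, hmemD⟩
    exact congrArg Subtype.val this
  have hz1 : z = 1 := by
    funext n
    apply aux_dihedral
    · have := congrFun (key n (DihedralGroup.sr 0)) n
      simpa using this.symm
    · have := congrFun (key n (DihedralGroup.r 1)) n
      simpa using this.symm
  rw [Subgroup.mem_bot]
  exact Subtype.ext hz1
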